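/- For a single-mode Gaussian state with symplectic eigenvalue ν ∈ (1/2, ∞), the scalar curvature Scal(ν) = -[(2ν - f(ν) + 4ν² f(ν))(f(ν) + 2ν(-1 + 6ν f(ν)))] / [8ν²(4ν² - 1) f(ν)²], where f(ν) = arccoth(2ν), is strictly monotonically increasing in ν. -/

import Mathlib

/-- `arccoth y = (1/2) ln((y+1)/(y-1))`. -/
noncomputable def arccoth (x : ℝ) : ℝ := (1/2) * Real.log ((x + 1) / (x - 1))

/-- The single-mode KMB scalar curvature
`Scal(ν) = -[(2ν - f(ν) + 4ν² f(ν))(f(ν) + 2ν(-1 + 6ν f(ν)))] / [8ν²(4ν² - 1) f(ν)²]`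
with `f(ν) = arccoth(2ν)`. -/
noncomputable def Scal1 (ν : ℝ) : ℝ :=
  -((2*ν - arccoth (2*ν) + 4*ν^2 * arccoth (2*ν))
      * (arccoth (2*ν) + 2*ν*(-1 + 6*ν*arccoth (2*ν))))
    / (8*ν^2*(4*ν^2 - 1) * (arccoth (2*ν))^2)

/-- First auxiliary factor: `A(u) = sinh u / u + 1`. -/
noncomputable def auxA (u : ℝ) : ℝ := Real.sinh u / u + 1

/-- Second auxiliary factor: `B(u) = (2u cosh u + u - sinh u) / (u (cosh u + 1))`. -/
noncomputable def auxB (u : ℝ) : ℝ :=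
  (2*u*Real.cosh u + u - Real.sinh u) / (u * (Real.cosh u + 1))

lemma sinh_lt_mul_cosh {x : ℝ} (hx : 0 < x) : Real.sinh x < x * Real.cosh x := by
  have hk : ∀ y : ℝ, HasDerivAt (fun t => t * Real.cosh t - Real.sinh t)
      (y * Real.sinh y) y := by
    intro y
    have h1 := (hasDerivAt_id y).mul (Real.hasDerivAt_cosh y)
    have h2 := Real.hasDerivAt_sinh y
    refine (h1.sub h2).congr_deriv ?_
    simp only [id_eq]
    ring
  have hmono : StrictMonoOn (fun t => t * Real.cosh t - Real.sinh t) (Set.Ici 0) := by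
    apply strictMonoOn_of_deriv_pos (convex_Ici 0)
    · exact ((continuous_id.mul Real.continuous_cosh).sub Real.continuous_sinh).continuousOn
    · intro y hy
      rw [interior_Ici] at hy
      rw [(hk y).deriv]
      exact mul_pos hy (Real.sinh_pos_iff.2 hy)
  have := hmono (Set.self_mem_Ici) (le_of_lt hx : (0:ℝ) ≤ x) hx
  simpa using this

lemma auxA_pos {u : ℝ} (hu : 0 < u) : 0 < auxA u := by
  have : 0 < Real.sinh u / u := div_pos (Real.sinh_pos_iff.2 hu) hu
  unfold auxA; linarith

lemma auxB_pos {u : ℝ} (hu : 0 < u) : 0 < auxB u := by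
  have h1 : Real.sinh u < u * Real.cosh u := sinh_lt_mul_cosh hu
  have h2 : 0 < u * Real.cosh u := lt_trans (Real.sinh_pos_iff.2 hu) h1
  have hnum : 0 < 2*u*Real.cosh u + u - Real.sinh u := by nlinarith
  have hden : 0 < u * (Real.cosh u + 1) := by
    have := Real.cosh_pos u; nlinarith
  exact div_pos hnum hden

lemma hasDerivAt_auxA {u : ℝ} (hu : u ≠ 0) :
    HasDerivAt auxA ((Real.cosh u * u - Real.sinh u) / u ^ 2) u := by
  have h := ((Real.hasDerivAt_sinh u).div (hasDerivAt_id u) hu).add_const 1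
  refine h.congr_deriv ?_
  simp

lemma hasDerivAt_auxB {u : ℝ} (hu : 0 < u) :
    HasDerivAt auxB
      (((Real.cosh u + 2*u*Real.sinh u + 1) * (u * (Real.cosh u + 1))
        - (2*u*Real.cosh u + u - Real.sinh u) * ((Real.cosh u + 1) + u * Real.sinh u))
        / (u * (Real.cosh u + 1)) ^ 2) u := by
  have hden : u * (Real.cosh u + 1) ≠ 0 := by
    have := Real.cosh_pos u; positivity
  have hN : HasDerivAt (fun t => 2*t*Real.cosh t + t - Real.sinh t)
      (Real.cosh u + 2*u*Real.sinh u + 1) u := by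
    have h1 := ((hasDerivAt_id u).const_mul 2).mul (Real.hasDerivAt_cosh u)
    have h2 := hasDerivAt_id u
    have h3 := Real.hasDerivAt_sinh u
    refine ((h1.add h2).sub h3).congr_deriv ?_
    simp only [id_eq]
    ring
  have hD : HasDerivAt (fun t => t * (Real.cosh t + 1))
      ((Real.cosh u + 1) + u * Real.sinh u) u := by
    have h1 := (hasDerivAt_id u).mul ((Real.hasDerivAt_cosh u).add_const 1)
    refine h1.congr_deriv ?_
    simp only [id_eq]
    ring
  have h := hN.div hD hden
  exact h.congr_deriv rfl

lemma auxA_strictMonoOn : StrictMonoOn auxA (Set.Ioi (0:ℝ)) := by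
  apply strictMonoOn_of_deriv_pos (convex_Ioi 0)
  · intro x hx
    exact (hasDerivAt_auxA (ne_of_gt hx)).differentiableAt.continuousAt.continuousWithinAt
  · intro x hx
    rw [interior_Ioi] at hx
    rw [Set.mem_Ioi] at hx
    rw [(hasDerivAt_auxA (ne_of_gt hx)).deriv]
    have h1 : Real.sinh x < x * Real.cosh x := sinh_lt_mul_cosh hx
    have h2 : (0:ℝ) < x ^ 2 := pow_pos hx 2
    apply div_pos _ h2
    nlinarith

lemma auxB_strictMonoOn : StrictMonoOn auxB (Set.Ioi (0:ℝ)) := by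
  apply strictMonoOn_of_deriv_pos (convex_Ioi 0)
  · intro x hx
    exact (hasDerivAt_auxB hx).differentiableAt.continuousAt.continuousWithinAt
  · intro x hx
    rw [interior_Ioi] at hx
    rw [Set.mem_Ioi] at hx
    rw [(hasDerivAt_auxB hx).deriv]
    have hc := Real.cosh_sq x
    have hnum : (Real.cosh x + 2*x*Real.sinh x + 1) * (x * (Real.cosh x + 1))
        - (2*x*Real.cosh x + x - Real.sinh x) * ((Real.cosh x + 1) + x * Real.sinh x)
        = (1 + Real.cosh x) * (Real.sinh x - x) + x^2 * Real.sinh x := by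
      linear_combination (-x) * hc
    rw [hnum]
    have h1 : x < Real.sinh x := Real.self_lt_sinh_iff.2 hx
    have h2 : 0 < Real.cosh x := Real.cosh_pos x
    have h3 : 0 < Real.sinh x := Real.sinh_pos_iff.2 hx
    have hden : (0:ℝ) < (x * (Real.cosh x + 1)) ^ 2 := by positivity
    apply div_pos _ hden
    nlinarith

lemma scal1_eq {ν : ℝ} (hν : 1/2 < ν) :
    Scal1 ν = -(auxA (Real.log ((2*ν+1)/(2*ν-1))) * auxB (Real.log ((2*ν+1)/(2*ν-1)))) := by
  have h1 : (0:ℝ) < 2*ν - 1 := by linarith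
  have h2 : (0:ℝ) < 2*ν + 1 := by linarith
  have hν0 : ν ≠ 0 := by positivity
  set r : ℝ := (2*ν+1)/(2*ν-1) with hr
  have hr0 : 0 < r := div_pos h2 h1
  have hr1 : 1 < r := (one_lt_div h1).2 (by linarith)
  set L : ℝ := Real.log r with hL
  have hLpos : 0 < L := Real.log_pos hr1
  have hL0 : L ≠ 0 := ne_of_gt hLpos
  have hd : (4*ν^2 - 1 : ℝ) ≠ 0 := by nlinarith
  have hexp : Real.exp L = r := Real.exp_log hr0
  have hexpneg : Real.exp (-L) = r⁻¹ := by rw [Real.exp_neg, hexp]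
  have hsinh : Real.sinh L = 4*ν/(4*ν^2 - 1) := by
    rw [Real.sinh_eq, hexp, hexpneg, hr]
    rw [div_eq_div_iff (by norm_num) hd]
    field_simp
    ring
  have hcosh : Real.cosh L = (4*ν^2 + 1)/(4*ν^2 - 1) := by
    rw [Real.cosh_eq, hexp, hexpneg, hr]
    rw [div_eq_div_iff (by norm_num) hd]
    field_simp
    ring
  have hfa : arccoth (2*ν) = L/2 := by
    unfold arccoth
    rw [hL, hr]
    ring_nf
  have hcosh1 : Real.cosh L + 1 ≠ 0 := by
    have := Real.cosh_pos L; linarith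
  unfold Scal1 auxA auxB
  rw [hfa, hsinh, hcosh]
  have h8 : (8:ℝ)*ν^2*(4*ν^2-1) ≠ 0 := by
    have : ν^2 ≠ 0 := pow_ne_zero 2 hν0
    intro h; apply hd; nlinarith [sq_nonneg ν]
  have hd' : ν ^ 2 * 4 - 1 ≠ 0 := by contrapose! hd; linarith
  have h9 : (ν ^ 2 * 4 + 1) / (ν ^ 2 * 4 - 1) + 1 ≠ 0 := by
    rw [div_add_one hd']; exact div_ne_zero (by nlinarith) hd'
  field_simp
  ring

theorem scal1_strictMonoOn : StrictMonoOn Scal1 (Set.Ioi (1/2 : ℝ)) := by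
  intro a ha b hb hab
  rw [Set.mem_Ioi] at ha hb
  have h1a : (0:ℝ) < 2*a - 1 := by linarith
  have h1b : (0:ℝ) < 2*b - 1 := by linarith
  set La : ℝ := Real.log ((2*a+1)/(2*a-1)) with hLa
  set Lb : ℝ := Real.log ((2*b+1)/(2*b-1)) with hLb
  have hra : (1:ℝ) < (2*a+1)/(2*a-1) := (one_lt_div h1a).2 (by linarith)
  have hrb : (1:ℝ) < (2*b+1)/(2*b-1) := (one_lt_div h1b).2 (by linarith)
  have hLapos : 0 < La := Real.log_pos hra
  have hLbpos : 0 < Lb := Real.log_pos hrb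
  have hlt : Lb < La := by
    apply Real.log_lt_log (by positivity)
    rw [div_lt_div_iff₀ h1b h1a]
    nlinarith
  rw [scal1_eq ha, scal1_eq hb, neg_lt_neg_iff]
  have hAb : auxA Lb < auxA La := auxA_strictMonoOn (Set.mem_Ioi.2 hLbpos) (Set.mem_Ioi.2 hLapos) hlt
  have hBb : auxB Lb < auxB La := auxB_strictMonoOn (Set.mem_Ioi.2 hLbpos) (Set.mem_Ioi.2 hLapos) hlt
  have h1 := auxA_pos hLbpos
  have h2 := auxB_pos hLbpos
  have h3 := auxA_pos hLapos
  nlinarith
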